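/- arXiv:1708.01194 — 3 statements merged into one kernel-verified Lean document; each statement's English description precedes it below -/
import Mathlib

section
/- The generalized Fibonacci group F(2,3), defined by the presentation ⟨x₁, x₂, x₃ ∣ x₁x₂x₃⁻¹, x₂x₃x₁⁻¹, x₃x₁x₂⁻¹⟩, is isomorphic to the quaternion group Q₈ of order 8. -/
open Fin.NatCast in
/-- The relators of the generalized Fibonacci group `F(r,n)`:
for each `i : Fin n` the word `x_i x_{i+1} ⋯ x_{i+r-1} x_{i+r}⁻¹` (subscripts mod `n`). -/
def fibRels (r n : ℕ) [NeZero n] : Set (FreeGroup (Fin n)) :=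
  Set.range fun i : Fin n =>
    ((List.range r).map fun j => FreeGroup.of (i + (j : Fin n))).prod *
      (FreeGroup.of (i + (r : Fin n)))⁻¹

namespace F23

abbrev P := PresentedGroup (fibRels 2 3)

def X (i : Fin 3) : P := PresentedGroup.of i

open Fin.NatCast in
lemma rel (i : Fin 3) : X i * X (i + 1) = X (i + 2) := by
  have hmem : FreeGroup.of (i + ((0:ℕ):Fin 3)) * FreeGroup.of (i + ((1:ℕ):Fin 3)) *
      (FreeGroup.of (i + ((2:ℕ):Fin 3)))⁻¹ ∈ fibRels 2 3 := ⟨i, by simp [List.range_succ]⟩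
  have h : (PresentedGroup.mk (fibRels 2 3)) (FreeGroup.of (i + ((0:ℕ):Fin 3)) *
      FreeGroup.of (i + ((1:ℕ):Fin 3)) * (FreeGroup.of (i + ((2:ℕ):Fin 3)))⁻¹) = 1 :=
    (QuotientGroup.eq_one_iff _).2 (Subgroup.subset_normalClosure hmem)
  have e0 : ((0:ℕ):Fin 3) = 0 := rfl
  have e1 : ((1:ℕ):Fin 3) = 1 := rfl
  have e2 : ((2:ℕ):Fin 3) = 2 := rfl
  rw [e0, e1, e2, add_zero, map_mul, map_mul, map_inv] at h
  have := mul_eq_one_iff_eq_inv.mp h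
  rw [inv_inv] at this
  exact this

lemma R0 : X 0 * X 1 = X 2 := by have := rel 0; norm_num at this; exact this
lemma R1 : X 1 * X 2 = X 0 := by
  have := rel 1
  have e1 : (1 : Fin 3) + 1 = 2 := rfl
  have e2 : (1 : Fin 3) + 2 = 0 := rfl
  rwa [e1, e2] at this
lemma R2 : X 2 * X 0 = X 1 := by
  have := rel 2
  have e1 : (2 : Fin 3) + 1 = 0 := rfl
  have e2 : (2 : Fin 3) + 2 = 1 := rfl
  rwa [e1, e2] at this

noncomputable def x : P := X 0
noncomputable def z : P := X 2

lemma hA : z * x * z = x := by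
  rw [x, z]; rw [R2]; exact R1
lemma hB : x * z * x = z := by
  rw [x, z, mul_assoc, R2]; exact R0
lemma hD : x * x = z * z := by
  rw [x, z]
  calc X 0 * X 0 = X 0 * (X 1 * X 2) := by rw [R1]
    _ = (X 0 * X 1) * X 2 := by group
    _ = X 2 * X 2 := by rw [R0]

lemma hz4 : z ^ (4:ℤ) = 1 := by
  have h1 : z * z = x * (z * z * z * z) * x := by
    calc z * z = (x * z * x) * (x * z * x) := by rw [hB]
      _ = x * z * (x * x) * z * x := by group
      _ = x * z * (z * z) * z * x := by rw [hD]
      _ = x * (z * z * z * z) * x := by group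
  have h2 : x * x = x * (z * z * z * z) * x := by rw [hD]; exact h1
  have h3 : z * z * z * z = 1 := left_eq_mul.mp (mul_right_cancel h2)
  calc z ^ (4:ℤ) = z * z * z * z := by
        rw [show (4:ℤ) = 1+1+1+1 by norm_num, zpow_add, zpow_add, zpow_add, zpow_one]
    _ = 1 := h3

lemma hxz : x * z = z⁻¹ * x := by
  calc x * z = z⁻¹ * (z * x * z) := by group
    _ = z⁻¹ * x := by rw [hA]

noncomputable def w : P := z⁻¹

lemma hw4 : w ^ (4:ℤ) = 1 := by
  rw [w, inv_zpow, hz4, inv_one]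

lemma hzx : z * x = x * z⁻¹ := by
  calc z * x = z * (x * z) * z⁻¹ := by group
    _ = z * (z⁻¹ * x) * z⁻¹ := by rw [hxz]
    _ = x * z⁻¹ := by group

lemma hxw : x * w * x⁻¹ = w⁻¹ := by
  rw [w, show x * z⁻¹ = z * x from hzx.symm]
  group

lemma conj_w (s : ℤ) : x * w ^ s * x⁻¹ = w ^ (-s) := by
  rw [← conj_zpow, hxw, inv_zpow, zpow_neg]

lemma comm_w (s : ℤ) : w ^ s * x = x * w ^ (-s) := by
  have h := conj_w (-s)
  rw [neg_neg] at h
  rw [← h]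
  group

lemma hcast {s t : ℤ} (h : (s : ZMod (2*2)) = (t : ZMod (2*2))) : w ^ s = w ^ t := by
  have hmod : s ≡ t [ZMOD ((2*2:ℕ):ℤ)] := (ZMod.intCast_eq_intCast_iff _ _ _).mp h
  obtain ⟨k, hk⟩ := Int.ModEq.dvd hmod
  have hs : s = t + 4 * (-k) := by push_cast at hk; linarith
  rw [hs, zpow_add, zpow_mul, hw4, one_zpow, mul_one]

lemma hx2 : x * x = w ^ (2:ℤ) := by
  rw [hD]
  calc z * z = z ^ (2:ℤ) := by rw [show (2:ℤ) = 1+1 by norm_num, zpow_add, zpow_one]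
    _ = z ^ ((-2:ℤ) + 4) := by norm_num
    _ = z ^ (-2:ℤ) * z ^ (4:ℤ) := zpow_add z _ _
    _ = z ^ (-2:ℤ) := by rw [hz4, mul_one]
    _ = w ^ (2:ℤ) := by rw [w, inv_zpow, ← zpow_neg]

/-- The map `QuaternionGroup 2 → P`. -/
noncomputable def psiFun : QuaternionGroup 2 → P
  | .a m => w ^ (m.val : ℤ)
  | .xa m => x * w ^ (m.val : ℤ)

lemma castval (m : ZMod (2*2)) : (((m.val : ℤ) : ZMod (2*2))) = m := by
  push_cast
  simp [ZMod.natCast_val]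

noncomputable def psi : QuaternionGroup 2 →* P where
  toFun := psiFun
  map_one' := by
    show psiFun (.a 0) = 1
    show w ^ (((0 : ZMod (2*2)).val : ℤ)) = 1
    rw [ZMod.val_zero]
    norm_num
  map_mul' := by
    rintro (i | i) (j | j)
    · show psiFun (.a (i + j)) = w ^ (i.val : ℤ) * w ^ (j.val : ℤ)
      show w ^ (((i+j).val : ℤ)) = _
      rw [← zpow_add]
      exact hcast (by rw [castval]; push_cast; simp [ZMod.natCast_val])
    · show psiFun (.xa (j - i)) = w ^ (i.val : ℤ) * (x * w ^ (j.val : ℤ))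
      show x * w ^ (((j - i).val : ℤ)) = _
      rw [← mul_assoc, comm_w, mul_assoc, ← zpow_add]
      congr 1
      exact hcast (by rw [castval]; push_cast; simp [ZMod.natCast_val]; ring)
    · show psiFun (.xa (i + j)) = (x * w ^ (i.val : ℤ)) * w ^ (j.val : ℤ)
      show x * w ^ (((i + j).val : ℤ)) = _
      rw [mul_assoc, ← zpow_add]
      congr 1
      exact hcast (by rw [castval]; push_cast; simp [ZMod.natCast_val])
    · show psiFun (.a (((2:ℕ) : ZMod (2*2)) + j - i)) = (x * w ^ (i.val : ℤ)) * (x * w ^ (j.val : ℤ))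
      show w ^ ((((2:ℕ) : ZMod (2*2)) + j - i).val : ℤ) = _
      have : (x * w ^ (i.val : ℤ)) * (x * w ^ (j.val : ℤ))
          = (x * x) * w ^ (-(i.val:ℤ) + (j.val:ℤ)) := by
        calc (x * w ^ (i.val : ℤ)) * (x * w ^ (j.val : ℤ))
            = x * (w ^ (i.val:ℤ) * x) * w ^ (j.val:ℤ) := by group
          _ = x * (x * w ^ (-(i.val:ℤ))) * w ^ (j.val:ℤ) := by rw [comm_w]
          _ = (x * x) * w ^ (-(i.val:ℤ) + (j.val:ℤ)) := by rw [zpow_add]; group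
      rw [this, hx2, ← zpow_add]
      exact hcast (by rw [castval]; push_cast; simp [ZMod.natCast_val]; ring)

/-- The generators' images in `QuaternionGroup 2`. -/
def f : Fin 3 → QuaternionGroup 2 := ![.xa 0, .xa 1, .a 3]

open Fin.NatCast in
lemma hf : ∀ r ∈ fibRels 2 3, FreeGroup.lift f r = 1 := by
  rintro r ⟨i, rfl⟩
  have hre : (((List.range 2).map fun j => FreeGroup.of (i + (j : Fin 3))).prod *
      (FreeGroup.of (i + ((2:ℕ) : Fin 3)))⁻¹) =
      FreeGroup.of (i + ((0:ℕ):Fin 3)) * FreeGroup.of (i + ((1:ℕ):Fin 3)) *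
        (FreeGroup.of (i + ((2:ℕ):Fin 3)))⁻¹ := by simp [List.range_succ]
  beta_reduce
  rw [hre]
  simp only [map_mul, map_inv, FreeGroup.lift_apply_of]
  fin_cases i <;> decide

noncomputable def phi : P →* QuaternionGroup 2 := PresentedGroup.toGroup hf

lemma phi_X (i : Fin 3) : phi (X i) = f i := PresentedGroup.toGroup.of hf

lemma phi_psi : phi.comp psi = MonoidHom.id _ := by
  ext q
  rcases q with m | m
  · show phi (psiFun (.a m)) = .a m
    show phi (w ^ (m.val : ℤ)) = .a m
    rw [map_zpow]
    have hphiw : phi w = .a 1 := by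
      rw [w, z, map_inv, phi_X]
      show (QuaternionGroup.a 3 : QuaternionGroup 2)⁻¹ = _
      decide
    rw [hphiw]
    have : (QuaternionGroup.a 1 : QuaternionGroup 2) ^ (m.val : ℤ) = .a m.val := by
      rw [zpow_natCast, QuaternionGroup.a_one_pow]
    rw [this, ZMod.natCast_val, ZMod.cast_id]
  · show phi (psiFun (.xa m)) = .xa m
    show phi (x * w ^ (m.val : ℤ)) = .xa m
    rw [map_mul, map_zpow]
    have hphiw : phi w = .a 1 := by
      rw [w, z, map_inv, phi_X]
      show (QuaternionGroup.a 3 : QuaternionGroup 2)⁻¹ = _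
      decide
    have hphix : phi x = .xa 0 := by rw [x, phi_X]; rfl
    rw [hphiw, hphix, zpow_natCast, QuaternionGroup.a_one_pow]
    rw [QuaternionGroup.xa_mul_a, zero_add, ZMod.natCast_val, ZMod.cast_id]

lemma psi_phi : psi.comp phi = MonoidHom.id _ := by
  apply PresentedGroup.ext
  intro i
  show psi (phi (X i)) = X i
  rw [phi_X]
  fin_cases i
  · show psiFun (.xa 0) = X 0
    show x * w ^ (((0 : ZMod (2*2)).val : ℤ)) = X 0
    rw [ZMod.val_zero]
    norm_num
    exact rfl
  · show psiFun (.xa 1) = X 1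
    show x * w ^ (((1 : ZMod (2*2)).val : ℤ)) = X 1
    have : ((1 : ZMod (2*2)).val : ℤ) = 1 := by decide
    rw [this, zpow_one, x, w, z]
    rw [eq_comm, ← R1]
    group
  · show psiFun (.a 3) = X 2
    show w ^ (((3 : ZMod (2*2)).val : ℤ)) = X 2
    have : ((3 : ZMod (2*2)).val : ℤ) = 3 := by decide
    rw [this]
    have h := hcast (s := 3) (t := -1) (by decide)
    rw [h, w, inv_zpow, ← zpow_neg, neg_neg, zpow_one, z]

end F23

/-- `F(2,3)` is isomorphic to the quaternion group `Q₈` of order 8. -/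
theorem F_2_3_isQ8 : Nonempty (PresentedGroup (fibRels 2 3) ≃* QuaternionGroup 2) :=
  ⟨MonoidHom.toMulEquiv F23.phi F23.psi F23.psi_phi F23.phi_psi⟩
end

section
/- The generalized Fibonacci group F(3,3), defined by the presentation ⟨x₁, x₂, x₃ ∣ x₁x₂x₃x₁⁻¹, x₂x₃x₁x₂⁻¹, x₃x₁x₂x₃⁻¹⟩, is cyclic of order 2. -/
namespace F33aux

abbrev G := PresentedGroup (fibRels 3 3)

open Fin.NatCast in
lemma rel_one (i : Fin 3) :
    (PresentedGroup.of i * PresentedGroup.of (i+1) * PresentedGroup.of (i+2) *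
      (PresentedGroup.of i)⁻¹ : G) = 1 := by
  have hmem : ((List.range 3).map fun j => FreeGroup.of (i + (j : Fin 3))).prod *
      (FreeGroup.of (i + (3 : Fin 3)))⁻¹ ∈ fibRels 3 3 := ⟨i, rfl⟩
  have h1 : (QuotientGroup.mk (((List.range 3).map fun j => FreeGroup.of (i + (j : Fin 3))).prod *
      (FreeGroup.of (i + (3 : Fin 3)))⁻¹) : G) = 1 := by
    rw [QuotientGroup.eq_one_iff]
    exact Subgroup.subset_normalClosure hmem
  have h3 : (3 : Fin 3) = 0 := rfl
  have hl : ((List.range 3).map fun j => FreeGroup.of (i + (j : Fin 3))) =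
      [FreeGroup.of (i + 0), FreeGroup.of (i + 1), FreeGroup.of (i + 2)] := rfl
  rw [hl] at h1
  simp only [List.range_succ, List.range_zero, List.map_append, List.map_cons, List.map_nil,
    List.prod_append, List.prod_cons, List.prod_nil, List.nil_append, h3] at h1
  have : ((QuotientGroup.mk' (Subgroup.normalClosure (fibRels 3 3)))
      (FreeGroup.of (i + 0) * 1 * FreeGroup.of (i + 1) * FreeGroup.of (i + 2) *
        (FreeGroup.of (i + 0))⁻¹) : G) = 1 := by
    convert h1 using 2
    group
    rfl
  simp only [add_zero, mul_one, map_mul, map_inv] at this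
  exact this

lemma consec (i : Fin 3) :
    (PresentedGroup.of (i+1) * PresentedGroup.of (i+2) : G) = 1 := by
  have h := rel_one i
  have : (PresentedGroup.of i : G) * (PresentedGroup.of (i+1) * PresentedGroup.of (i+2)) *
      (PresentedGroup.of i)⁻¹ = 1 := by rw [← h]; group
  calc (PresentedGroup.of (i+1) * PresentedGroup.of (i+2) : G)
      = (PresentedGroup.of i)⁻¹ * ((PresentedGroup.of i : G) *
        (PresentedGroup.of (i+1) * PresentedGroup.of (i+2)) * (PresentedGroup.of i)⁻¹) *
        PresentedGroup.of i := by group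
    _ = 1 := by rw [this]; group

lemma of_all_eq (i : Fin 3) : (PresentedGroup.of i : G) = PresentedGroup.of (0 : Fin 3) := by
  have e01 : (PresentedGroup.of (1 : Fin 3) * PresentedGroup.of (2 : Fin 3) : G) = 1 := consec 0
  have e12 : (PresentedGroup.of (2 : Fin 3) * PresentedGroup.of (0 : Fin 3) : G) = 1 := by
    have := consec 1; convert this using 3 <;> decide
  have e20 : (PresentedGroup.of (0 : Fin 3) * PresentedGroup.of (1 : Fin 3) : G) = 1 := by
    have := consec 2; convert this using 3 <;> decide
  have h2 : (PresentedGroup.of (2 : Fin 3) : G) = (PresentedGroup.of (1 : Fin 3))⁻¹ :=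
    eq_inv_of_mul_eq_one_right e01
  have h01 : (PresentedGroup.of (0 : Fin 3) : G) = PresentedGroup.of (1 : Fin 3) := by
    have := eq_inv_of_mul_eq_one_right e12
    rw [this, h2, inv_inv]
  have hsq : (PresentedGroup.of (0 : Fin 3) : G) * PresentedGroup.of (0 : Fin 3) = 1 := by
    nth_rewrite 2 [h01]; exact e20
  have h2' : (PresentedGroup.of (2 : Fin 3) : G) = PresentedGroup.of (0 : Fin 3) := by
    rw [h2, ← h01, inv_eq_of_mul_eq_one_right hsq]
  fin_cases i
  · rfl
  · rw [show ((⟨1, by norm_num⟩ : Fin 3)) = (1 : Fin 3) from rfl, ← h01]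
  · rw [show ((⟨2, by norm_num⟩ : Fin 3)) = (2 : Fin 3) from rfl, h2']

lemma sq_one : (PresentedGroup.of (0 : Fin 3) : G) * PresentedGroup.of (0 : Fin 3) = 1 := by
  have := consec 0
  rwa [of_all_eq (0+1), of_all_eq (0+2)] at this

end F33aux

/-- `F(3,3)` is cyclic of order 2. -/
theorem F_3_3_cyclic2 :
    Nonempty (PresentedGroup (fibRels 3 3) ≃* Multiplicative (ZMod 2)) := by
  classical
  -- forward map
  have hrel : ∀ r ∈ fibRels 3 3,
      FreeGroup.lift (fun _ : Fin 3 => (Multiplicative.ofAdd (1 : ZMod 2))) r = 1 := by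
    rintro r ⟨i, rfl⟩
    simp [List.range_succ]
    decide
  let f : PresentedGroup (fibRels 3 3) →* Multiplicative (ZMod 2) :=
    PresentedGroup.toGroup hrel
  -- backward map
  set g : F33aux.G := PresentedGroup.of (0 : Fin 3) with hg
  have hgsq : g * g = 1 := F33aux.sq_one
  have h2 : ((zmultiplesHom (Additive F33aux.G)) (Additive.ofMul g)) (2 : ℤ) = 0 := by
    simp [zmultiplesHom_apply, two_zsmul]
    exact hgsq
  let φ : ZMod 2 →+ Additive F33aux.G := ZMod.lift 2 ⟨zmultiplesHom _ (Additive.ofMul g), h2⟩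
  let h : Multiplicative (ZMod 2) →* F33aux.G := AddMonoidHom.toMultiplicativeLeft φ
  have hφ1 : h (Multiplicative.ofAdd (1 : ZMod 2)) = g := by
    show Additive.toMul (φ (1 : ZMod 2)) = g
    have : (1 : ZMod 2) = ((1 : ℤ) : ZMod 2) := by norm_num
    rw [this, ZMod.lift_coe]
    simp [zmultiplesHom_apply]
  have hcomp1 : h.comp f = MonoidHom.id _ := by
    apply PresentedGroup.ext
    intro x
    simp only [MonoidHom.comp_apply, MonoidHom.id_apply]
    rw [show f (PresentedGroup.of x) = Multiplicative.ofAdd (1 : ZMod 2) from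
      PresentedGroup.toGroup.of hrel, hφ1, hg, F33aux.of_all_eq x]
  have hcomp2 : f.comp h = MonoidHom.id _ := by
    refine MonoidHom.ext fun x => ?_
    simp only [MonoidHom.comp_apply, MonoidHom.id_apply]
    have key : ∀ y : ZMod 2, y = 0 ∨ y = 1 := by decide
    have : x = Multiplicative.ofAdd (0 : ZMod 2) ∨ x = Multiplicative.ofAdd (1 : ZMod 2) := by
      rcases key (Multiplicative.toAdd x) with hy | hy <;>
        [left; right] <;> rw [← ofAdd_toAdd x, hy]
    rcases this with rfl | rfl
    · simp [ofAdd_zero]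
    · rw [hφ1, hg, show f (PresentedGroup.of (0 : Fin 3)) = Multiplicative.ofAdd (1 : ZMod 2) from
        PresentedGroup.toGroup.of hrel]
  exact ⟨MonoidHom.toMulEquiv f h hcomp1 hcomp2⟩
end

section
/- For every n ≥ 5, the generalized Fibonacci group F(n+2, n) surjects onto a nontrivial cyclic group; in particular, F(n+2, n) is a nontrivial group. -/
open Fin.NatCast in
/-- For every `n ≥ 5`, the group `F(n+2, n)` surjects onto a nontrivial cyclic group;
in particular `F(n+2, n)` is nontrivial. -/
theorem F_np2_n_surjects (n : ℕ) [NeZero n] (hn : 5 ≤ n) :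
    (∃ m : ℕ, 2 ≤ m ∧ ∃ f : PresentedGroup (fibRels (n + 2) n) →* Multiplicative (ZMod m),
        Function.Surjective f) ∧
      Nontrivial (PresentedGroup (fibRels (n + 2) n)) := by
  set m := n + 1 with hm
  haveI : NeZero m := ⟨by omega⟩
  -- the map sending every generator to `ofAdd 1`
  have hrel : ∀ r ∈ fibRels (n + 2) n,
      FreeGroup.lift (fun _ : Fin n => (Multiplicative.ofAdd (1 : ZMod m))) r = 1 := by
    rintro r ⟨i, rfl⟩
    simp only [map_mul, map_inv, FreeGroup.lift_apply_of]
    rw [show ((List.range (n + 2)).map fun j =>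
        FreeGroup.of (i + (j : Fin n))).prod =
        ((List.range (n + 2)).map fun j => FreeGroup.of (i + (j : Fin n))).prod from rfl]
    have : (FreeGroup.lift fun _ : Fin n => Multiplicative.ofAdd (1 : ZMod m))
        ((List.range (n + 2)).map fun j => FreeGroup.of (i + (j : Fin n))).prod
        = Multiplicative.ofAdd ((n + 2 : ℕ) : ZMod m) := by
      rw [map_list_prod]
      rw [List.prod_eq_pow_card _ (Multiplicative.ofAdd (1 : ZMod m))]
      · rw [← ofAdd_nsmul]
        congr 1
        rw [nsmul_eq_mul, mul_one]
        congr 1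
        simp [Function.comp_def]
      · intro x hx
        simp only [List.mem_map] at hx
        obtain ⟨j, ⟨k, -, rfl⟩, rfl⟩ := hx
        simp
    rw [this]
    rw [← ofAdd_neg, ← ofAdd_add]
    have : ((n + 2 : ℕ) : ZMod m) + -1 = 0 := by
      have h2 : (n + 2 : ℕ) = m + 1 := by omega
      rw [h2]
      push_cast
      simp [ZMod.natCast_self]
    rw [this, ofAdd_zero]
  let f := PresentedGroup.toGroup hrel
  have hsurj : Function.Surjective f := by
    intro y
    refine ⟨(PresentedGroup.of (0 : Fin n)) ^ (y.toAdd).val, ?_⟩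
    rw [map_pow, PresentedGroup.toGroup.of]
    rw [← ofAdd_nsmul, nsmul_eq_mul, mul_one, ZMod.natCast_val, ZMod.cast_id]
    exact ofAdd_toAdd y
  refine ⟨⟨m, by omega, f, hsurj⟩, ?_⟩
  haveI : Fact (1 < m) := ⟨by omega⟩
  obtain ⟨a, b, hab⟩ := exists_pair_ne (Multiplicative (ZMod m))
  obtain ⟨x, rfl⟩ := hsurj a
  obtain ⟨y, rfl⟩ := hsurj b
  exact ⟨x, y, fun h => hab (by rw [h])⟩
end
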